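/- Let Γ = (V,E) be a connected graph with path metric d, and let γ' : T' → V be an almost-geodesic ray. Then there exists a geodesic ray γ : T → V such that for all y, z ∈ V, lim_{t→∞, t∈T} (d(γ(t),y) − d(γ(t),z)) = lim_{t→∞, t∈T'} (d(γ'(t),y) − d(γ'(t),z)) (both limits existing in ℝ). In other words, every Busemann point of the metric boundary of a graph with the path metric is the limit of a geodesic ray. -/

import Mathlib

open Filter Topology

/-- `T` is a valid domain for a ray: an unbounded subset of `[0,∞)` containing `0`. -/
def IsRayDomain (T : Set ℝ) : Prop :=
  T ⊆ Set.Ici (0 : ℝ) ∧ 0 ∈ T ∧ ∀ M : ℝ, ∃ t ∈ T, M < t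

/-- A weakly-geodesic ray for the distance function `d`. -/
def WeaklyGeodesicRay {X : Type*} (d : X → X → ℝ) (T : Set ℝ) (γ : ℝ → X) : Prop :=
  ∀ y : X, ∀ ε : ℝ, 0 < ε → ∃ N : ℝ, ∀ s ∈ T, ∀ t ∈ T, N ≤ s → N ≤ t →
    |d (γ t) (γ 0) - t| < ε ∧ |d (γ t) y - d (γ s) y - (t - s)| < ε

/-- An almost-geodesic ray for the distance function `d`. -/
def AlmostGeodesicRay {X : Type*} (d : X → X → ℝ) (T : Set ℝ) (γ : ℝ → X) : Prop :=
  ∀ ε : ℝ, 0 < ε → ∃ N : ℝ, ∀ s ∈ T, ∀ t ∈ T, N ≤ s → s ≤ t →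
    |d (γ t) (γ s) + d (γ s) (γ 0) - t| < ε

/-- A geodesic ray for the distance function `d`. -/
def GeodesicRay {X : Type*} (d : X → X → ℝ) (T : Set ℝ) (γ : ℝ → X) : Prop :=
  ∀ s ∈ T, ∀ t ∈ T, d (γ s) (γ t) = |s - t|

/-- `L` is the limit of `d(γ(t),y) - d(γ(t),z)` as `t → ∞` along `T`. -/
def RayLimit {X : Type*} (d : X → X → ℝ) (T : Set ℝ) (γ : ℝ → X) (y z : X) (L : ℝ) : Prop :=
  Tendsto (fun t => d (γ t) y - d (γ t) z) (atTop ⊓ 𝓟 T) (𝓝 L)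

/-- Minimal paths from `a` to `c` and from `b` to `c` share a tail: there is a vertex
`z ≠ c` lying simultaneously on a minimal path from `a` to `c` and on one from `b` to `c`. -/
def ShareTail {V : Type*} (d : V → V → ℕ) (a b c : V) : Prop :=
  ∃ z, z ≠ c ∧ d a z + d z c = d a c ∧ d b z + d z c = d b c

/-- No minimal paths from apex `x` to `y` and from `x` to `z` share a vertex other than `x`. -/
def RigidApex {V : Type*} (d : V → V → ℕ) (x y z : V) : Prop :=
  ∀ w, w ≠ x → ¬(d x w + d w y = d x y ∧ d x w + d w z = d x z)

/-- A rigid triple: three distinct vertices, rigid at each apex. -/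
def RigidTriple {V : Type*} (d : V → V → ℕ) (x y z : V) : Prop :=
  x ≠ y ∧ y ≠ z ∧ x ≠ z ∧
    RigidApex d x y z ∧ RigidApex d y x z ∧ RigidApex d z x y

lemma natcast_close {a b : ℕ} (h : |(a:ℝ) - b| < 1) : a = b := by
  have h' := abs_lt.mp h
  by_contra hne
  rcases Nat.lt_or_ge a b with hl | hg
  · have : (a:ℝ) + 1 ≤ b := by exact_mod_cast Nat.succ_le_of_lt hl
    linarith [h'.1, h'.2]
  · have hl : b < a := lt_of_le_of_ne hg (Ne.symm hne)
    have : (b:ℝ) + 1 ≤ a := by exact_mod_cast Nat.succ_le_of_lt hl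
    linarith [h'.1, h'.2]

lemma exists_adj_step {V : Type*} {G : SimpleGraph V} (hconn : G.Connected) {x v : V}
    (h : 0 < G.dist x v) : ∃ w, G.Adj x w ∧ G.dist w v + 1 = G.dist x v := by
  obtain ⟨p, hp⟩ := hconn.exists_walk_length_eq_dist x v
  cases p with
  | nil => simp at hp h
  | @cons _ w _ hadj q =>
    refine ⟨w, hadj, ?_⟩
    have h1 : G.dist w v ≤ q.length := SimpleGraph.dist_le q
    have h3 : G.dist x w ≤ 1 := by
      have := SimpleGraph.dist_le (SimpleGraph.Walk.cons hadj SimpleGraph.Walk.nil)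
      simpa using this
    have h2 : G.dist x v ≤ G.dist x w + G.dist w v := hconn.dist_triangle
    simp [SimpleGraph.Walk.length_cons] at hp
    omega

/-- In a connected graph with the path metric, every almost-geodesic ray
determines the same boundary point as some geodesic ray: there is a geodesic ray `γ`
whose limits `lim (d(γ(t),y) − d(γ(t),z))` all exist and agree with those of `γ'`. -/
theorem stmt3 {V : Type*} (G : SimpleGraph V) (hconn : G.Connected)
    (T' : Set ℝ) (γ' : ℝ → V) (hT' : IsRayDomain T')
    (hγ' : AlmostGeodesicRay (fun x y => (G.dist x y : ℝ)) T' γ') :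
    ∃ T : Set ℝ, ∃ γ : ℝ → V, IsRayDomain T ∧
      GeodesicRay (fun x y => (G.dist x y : ℝ)) T γ ∧
      ∀ y z : V, ∃ L : ℝ,
        RayLimit (fun x y => (G.dist x y : ℝ)) T γ y z L ∧
        RayLimit (fun x y => (G.dist x y : ℝ)) T' γ' y z L := by
  classical
  obtain ⟨hT'sub, hT'0, hT'unb⟩ := hT'
  obtain ⟨N, hN⟩ := hγ' (1/4) (by norm_num)
  obtain ⟨t₀, ht₀T, ht₀N⟩ := hT'unb N
  set D : ℝ → ℕ := fun t => G.dist (γ' t) (γ' 0) with hD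
  -- D is close to t
  have hDclose : ∀ t ∈ T', t₀ ≤ t → |(D t : ℝ) - t| < 1/4 := by
    intro t ht htt
    have := hN t ht t ht (le_trans ht₀N.le htt) le_rfl
    simpa [SimpleGraph.dist_self] using this
  -- exact additivity
  have hkey : ∀ s ∈ T', ∀ t ∈ T', t₀ ≤ s → s ≤ t →
      G.dist (γ' t) (γ' s) + D s = D t := by
    intro s hs t ht hts hst
    have h1 := hN s hs t ht (le_trans ht₀N.le hts) hst
    have h2 := hDclose t ht (le_trans hts hst)
    apply natcast_close
    push_cast
    rw [abs_lt] at h1 h2 ⊢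
    simp only [hD] at h2 ⊢
    push_cast at h1 h2 ⊢
    constructor <;> linarith [h1.1, h1.2, h2.1, h2.2]
  -- the sequence u
  let u : ℕ → ℝ := fun k => Nat.rec t₀ (fun _ p => (hT'unb (p + 2)).choose) k
  have hu0 : u 0 = t₀ := rfl
  have huS : ∀ k, u (k+1) = (hT'unb (u k + 2)).choose := fun k => rfl
  have humem : ∀ k, u k ∈ T' := by
    intro k
    cases k with
    | zero => exact ht₀T
    | succ k => rw [huS]; exact (hT'unb (u k + 2)).choose_spec.1
  have hustep : ∀ k, u k + 2 < u (k+1) := by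
    intro k; rw [huS]; exact (hT'unb (u k + 2)).choose_spec.2
  have humono : Monotone u := monotone_nat_of_le_succ (fun k => by linarith [hustep k])
  have hut₀ : ∀ k, t₀ ≤ u k := fun k => hu0 ▸ humono (Nat.zero_le k)
  have hu2k : ∀ k, t₀ + 2*k ≤ u k := by
    intro k
    induction k with
    | zero => simp [hu0]
    | succ k ih => push_cast; push_cast at ih; linarith [hustep k]
  have huunb : ∀ M : ℝ, ∃ k : ℕ, M ≤ u k := by
    intro M
    obtain ⟨k, hk⟩ := exists_nat_gt ((M - t₀)/2)
    exact ⟨k, by linarith [hu2k k]⟩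
  -- D along u
  have hDu : ∀ k, D (u k) + 1 ≤ D (u (k+1)) := by
    intro k
    have h1 := hDclose (u k) (humem k) (hut₀ k)
    have h2 := hDclose (u (k+1)) (humem (k+1)) (hut₀ (k+1))
    rw [abs_lt] at h1 h2
    have : (D (u k) : ℝ) + 1 < D (u (k+1)) := by linarith [hustep k, h1.1, h1.2, h2.1, h2.2]
    exact_mod_cast this.le
  have hDle : ∀ k, D (u 0) ≤ D (u k) := by
    intro k
    induction k with
    | zero => exact le_rfl
    | succ k ih => have := hDu k; omega
  -- integer milestones
  let m : ℕ → ℕ := fun k => D (u k) - D (u 0)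
  have hmD : ∀ k, D (u k) = m k + D (u 0) := by
    intro k; have := hDle k; simp only [m]; omega
  have hmlt : ∀ k, m k + 1 ≤ m (k+1) := by
    intro k; have := hDu k; have := hDle k; have := hDle (k+1); simp only [m]; omega
  have hmmono : Monotone m := monotone_nat_of_le_succ (fun k => by have := hmlt k; omega)
  have hmk : ∀ k, k ≤ m k := by
    intro k
    induction k with
    | zero => exact Nat.zero_le _
    | succ k ih => have := hmlt k; omega
  -- index function
  have hkfex : ∀ n : ℕ, ∃ k, n ≤ m k := fun n => ⟨n, hmk n⟩
  let kf : ℕ → ℕ := fun n => Nat.find (hkfex n)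
  have hkf : ∀ n, n ≤ m (kf n) := fun n => Nat.find_spec (hkfex n)
  have hkfle : ∀ n k, n ≤ m k → kf n ≤ k := fun n k h => Nat.find_min' (hkfex n) h
  have hkfmono : ∀ a b, a ≤ b → kf a ≤ kf b :=
    fun a b h => hkfle a (kf b) (le_trans h (hkf b))
  let τ : ℕ → ℝ := fun n => u (kf n)
  have hτmem : ∀ n, τ n ∈ T' := fun n => humem (kf n)
  have hτt₀ : ∀ n, t₀ ≤ τ n := fun n => hut₀ (kf n)
  have hτmono : ∀ a b, a ≤ b → τ a ≤ τ b := fun a b h => humono (hkfmono a b h)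
  have hτD : ∀ n, n + D (u 0) ≤ D (τ n) := by
    intro n
    have h1 := hkf n
    have h2 := hmD (kf n)
    simp only [τ]; omega
  -- the geodesic sequence
  let step : ℕ → V → V := fun n v =>
    if h : ∃ w, G.Adj v w ∧ G.dist w (γ' (τ (n+1))) + 1 = G.dist v (γ' (τ (n+1)))
    then h.choose else v
  let c : ℕ → V := fun n => Nat.rec (γ' t₀) (fun k v => step k v) n
  have hc0 : c 0 = γ' t₀ := rfl
  have hcS : ∀ n, c (n+1) = step n (c n) := fun n => rfl
  -- invariant
  have hQ : ∀ n, (∀ t ∈ T', τ n ≤ t → G.dist (c n) (γ' t) + (n + D (u 0)) = D t) ∧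
      G.dist (c n) (c (n+1)) ≤ 1 := by
    intro n
    induction n with
    | zero =>
      have hQ0 : ∀ t ∈ T', τ 0 ≤ t → G.dist (c 0) (γ' t) + (0 + D (u 0)) = D t := by
        intro t ht htt
        have := hkey t₀ ht₀T t ht le_rfl (le_trans (hτt₀ 0) htt)
        rw [hc0, SimpleGraph.dist_comm, hu0]
        simpa using this
      refine ⟨hQ0, ?_⟩
      -- the step exists at 0
      have hpos : 0 < G.dist (c 0) (γ' (τ 1)) := by
        have h1 := hQ0 (τ 1) (hτmem 1) (hτmono 0 1 (by omega))
        have h2 := hτD 1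
        omega
      obtain ⟨w, hadj, hw⟩ := exists_adj_step hconn hpos
      have hcond : ∃ w, G.Adj (c 0) w ∧
          G.dist w (γ' (τ (0+1))) + 1 = G.dist (c 0) (γ' (τ (0+1))) := ⟨w, hadj, hw⟩
      rw [hcS 0]; simp only [step]; rw [dif_pos hcond]
      have hadj' := hcond.choose_spec.1
      have := SimpleGraph.dist_le (SimpleGraph.Walk.cons hadj' SimpleGraph.Walk.nil)
      simpa using this
    | succ n ih =>
      obtain ⟨ihQ, _⟩ := ih
      -- identify c (n+1)
      have hpos : 0 < G.dist (c n) (γ' (τ (n+1))) := by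
        have h1 := ihQ (τ (n+1)) (hτmem (n+1)) (hτmono n (n+1) (by omega))
        have h2 := hτD (n+1)
        omega
      obtain ⟨w₀, hadj₀, hw₀⟩ := exists_adj_step hconn hpos
      have hcond : ∃ w, G.Adj (c n) w ∧
          G.dist w (γ' (τ (n+1))) + 1 = G.dist (c n) (γ' (τ (n+1))) := ⟨w₀, hadj₀, hw₀⟩
      have hcn1 : c (n+1) = hcond.choose := by
        rw [hcS n]; simp only [step]; rw [dif_pos hcond]
      obtain ⟨hadj, hw⟩ := hcond.choose_spec
      rw [← hcn1] at hadj hw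
      have hdcc : G.dist (c n) (c (n+1)) ≤ 1 := by
        have := SimpleGraph.dist_le (SimpleGraph.Walk.cons hadj SimpleGraph.Walk.nil)
        simpa using this
      have hQ1 : ∀ t ∈ T', τ (n+1) ≤ t → G.dist (c (n+1)) (γ' t) + ((n+1) + D (u 0)) = D t := by
        intro t ht htt
        have hQnt := ihQ t ht (le_trans (hτmono n (n+1) (by omega)) htt)
        have hQnτ := ihQ (τ (n+1)) (hτmem (n+1)) (hτmono n (n+1) (by omega))
        have hkeyτ := hkey (τ (n+1)) (hτmem (n+1)) t ht (hτt₀ (n+1)) htt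
        have htri1 : G.dist (c (n+1)) (γ' t) ≤
            G.dist (c (n+1)) (γ' (τ (n+1))) + G.dist (γ' (τ (n+1))) (γ' t) :=
          hconn.dist_triangle
        have htri2 : G.dist (c n) (γ' t) ≤
            G.dist (c n) (c (n+1)) + G.dist (c (n+1)) (γ' t) := hconn.dist_triangle
        have hsymm : G.dist (γ' (τ (n+1))) (γ' t) = G.dist (γ' t) (γ' (τ (n+1))) :=
          SimpleGraph.dist_comm
        omega
      refine ⟨hQ1, ?_⟩
      -- existence of next step
      have hpos1 : 0 < G.dist (c (n+1)) (γ' (τ (n+2))) := by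
        have h1 := hQ1 (τ (n+2)) (hτmem (n+2)) (hτmono (n+1) (n+2) (by omega))
        have h2 := hτD (n+2)
        omega
      obtain ⟨w₁, hadj₁, hw₁⟩ := exists_adj_step hconn hpos1
      have hcond1 : ∃ w, G.Adj (c (n+1)) w ∧
          G.dist w (γ' (τ (n+2))) + 1 = G.dist (c (n+1)) (γ' (τ (n+2))) := ⟨w₁, hadj₁, hw₁⟩
      have hcn2 : c (n+2) = hcond1.choose := by
        rw [hcS (n+1)]; simp only [step]; rw [dif_pos hcond1]
      have hadj' := hcond1.choose_spec.1
      rw [← hcn2] at hadj'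
      have := SimpleGraph.dist_le (SimpleGraph.Walk.cons hadj' SimpleGraph.Walk.nil)
      simpa using this
  have hQ' : ∀ n, ∀ t ∈ T', τ n ≤ t → G.dist (c n) (γ' t) + (n + D (u 0)) = D t :=
    fun n => (hQ n).1
  have hchain : ∀ a b : ℕ, a ≤ b → G.dist (c a) (c b) ≤ b - a := by
    intro a b hab
    induction b with
    | zero => simp_all
    | succ b ih =>
      rcases Nat.lt_or_ge a (b+1) with h | h
      · have hab' : a ≤ b := by omega
        have h1 := ih hab'
        have h2 := (hQ b).2
        have htri : G.dist (c a) (c (b+1)) ≤ G.dist (c a) (c b) + G.dist (c b) (c (b+1)) :=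
          hconn.dist_triangle
        omega
      · have : a = b + 1 := by omega
        subst this
        simp [SimpleGraph.dist_self]
  have hgeo : ∀ a b : ℕ, a ≤ b → G.dist (c a) (c b) = b - a := by
    intro a b hab
    obtain ⟨t, ht, htgt⟩ := hT'unb (τ b)
    have h1 := hQ' a t ht (le_trans (hτmono a b hab) htgt.le)
    have h2 := hQ' b t ht htgt.le
    have htri : G.dist (c a) (γ' t) ≤ G.dist (c a) (c b) + G.dist (c b) (γ' t) :=
      hconn.dist_triangle
    have h3 := hchain a b hab
    omega
  have hcm : ∀ k, c (m k) = γ' (u k) := by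
    intro k
    have hτle : τ (m k) ≤ u k := humono (hkfle (m k) k le_rfl)
    have h1 := hQ' (m k) (u k) (humem k) hτle
    have h2 := hmD k
    have : G.dist (c (m k)) (γ' (u k)) = 0 := by omega
    exact (hconn.dist_eq_zero_iff).mp this
  -- eventual constancy of horofunctions along T'
  have hmin : ∀ y : V, ∃ a : ℤ, ∃ ty, ty ∈ T' ∧ t₀ ≤ ty ∧
      ∀ t ∈ T', ty ≤ t → (G.dist (γ' t) y : ℤ) - D t = a := by
    intro y
    set P : ℤ → Prop := fun v => ∃ t, t ∈ T' ∧ t₀ ≤ t ∧ (G.dist (γ' t) y : ℤ) - D t = v with hP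
    have Hbdd : ∃ b : ℤ, ∀ v : ℤ, P v → b ≤ v := by
      refine ⟨-(G.dist y (γ' 0) : ℤ), ?_⟩
      rintro v ⟨t, ht, htt, rfl⟩
      have htri : G.dist (γ' t) (γ' 0) ≤ G.dist (γ' t) y + G.dist y (γ' 0) :=
        hconn.dist_triangle
      simp only [hD]
      omega
    have Hinh : ∃ v : ℤ, P v := ⟨_, t₀, ht₀T, le_rfl, rfl⟩
    obtain ⟨lb, ⟨ty, htyT, htyt₀, htyval⟩, hleast⟩ := Int.exists_least_of_bdd Hbdd Hinh
    refine ⟨lb, ty, htyT, htyt₀, ?_⟩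
    intro t ht htt
    have hge : lb ≤ (G.dist (γ' t) y : ℤ) - D t :=
      hleast _ ⟨t, ht, le_trans htyt₀ htt, rfl⟩
    have htri : G.dist (γ' t) y ≤ G.dist (γ' t) (γ' ty) + G.dist (γ' ty) y :=
      hconn.dist_triangle
    have hk := hkey ty htyT t ht htyt₀ htt
    omega
  -- eventual constancy along the geodesic ray
  have hconst : ∀ (y : V) (ay : ℤ) (k₀ : ℕ),
      (∀ t ∈ T', u k₀ ≤ t → (G.dist (γ' t) y : ℤ) - D t = ay) →
      ∀ n, m k₀ ≤ n → (G.dist (c n) y : ℤ) - n = ay + D (u 0) := by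
    intro y ay k₀ hev n hn
    have hg : ∀ a b : ℕ, a ≤ b → (G.dist (c b) y : ℤ) - b ≤ (G.dist (c a) y : ℤ) - a := by
      intro a b hab
      have htri : G.dist (c b) y ≤ G.dist (c b) (c a) + G.dist (c a) y := hconn.dist_triangle
      have hcomm : G.dist (c b) (c a) = G.dist (c a) (c b) := SimpleGraph.dist_comm
      have := hgeo a b hab
      omega
    have hval : ∀ k, k₀ ≤ k → (G.dist (c (m k)) y : ℤ) - (m k) = ay + D (u 0) := by
      intro k hk
      rw [hcm k]
      have h1 := hev (u k) (humem k) (humono hk)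
      have h2 := hmD k
      omega
    have h2 : n ≤ m (max n k₀) := le_trans (hmk n) (hmmono (le_max_left n k₀))
    have e1 := hval k₀ le_rfl
    have e2 := hval (max n k₀) (le_max_right _ _)
    have g1 := hg (m k₀) n hn
    have g2 := hg n (m (max n k₀)) h2
    omega
  -- assemble
  refine ⟨Set.range ((↑) : ℕ → ℝ), fun r => c ⌊r⌋₊, ?_, ?_, ?_⟩
  · refine ⟨?_, ⟨0, by simp⟩, ?_⟩
    · rintro r ⟨n, rfl⟩
      exact Set.mem_Ici.mpr (by positivity)
    · intro M
      obtain ⟨n, hn⟩ := exists_nat_gt M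
      exact ⟨n, ⟨n, rfl⟩, hn⟩
  · rintro s ⟨a, rfl⟩ t ⟨b, rfl⟩
    simp only [Nat.floor_natCast]
    rcases le_total a b with hab | hab
    · rw [hgeo a b hab, abs_sub_comm,
        abs_of_nonneg (sub_nonneg.mpr (Nat.cast_le.mpr hab : (a:ℝ) ≤ b))]
      push_cast [hab]
      ring
    · rw [SimpleGraph.dist_comm, hgeo b a hab,
        abs_of_nonneg (sub_nonneg.mpr (Nat.cast_le.mpr hab : (b:ℝ) ≤ a))]
      push_cast [hab]
      ring
  · intro y z
    obtain ⟨ay, ty, htyT, htyt₀, hfy⟩ := hmin y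
    obtain ⟨az, tz, htzT, htzt₀, hfz⟩ := hmin z
    obtain ⟨ky, hky⟩ := huunb ty
    obtain ⟨kz, hkz⟩ := huunb tz
    set k₀ := max ky kz with hk₀
    have hevy : ∀ t ∈ T', u k₀ ≤ t → (G.dist (γ' t) y : ℤ) - D t = ay :=
      fun t ht htt => hfy t ht (le_trans (le_trans hky (humono (le_max_left ky kz))) htt)
    have hevz : ∀ t ∈ T', u k₀ ≤ t → (G.dist (γ' t) z : ℤ) - D t = az :=
      fun t ht htt => hfz t ht (le_trans (le_trans hkz (humono (le_max_right ky kz))) htt)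
    refine ⟨((ay - az : ℤ) : ℝ), ?_, ?_⟩
    · -- limit along the geodesic ray
      apply Tendsto.congr' _ tendsto_const_nhds
      have h1 : ∀ᶠ r in atTop ⊓ 𝓟 (Set.range ((↑) : ℕ → ℝ)), ((m k₀ : ℕ) : ℝ) ≤ r :=
        (eventually_ge_atTop _).filter_mono inf_le_left
      have h2 : ∀ᶠ r in atTop ⊓ 𝓟 (Set.range ((↑) : ℕ → ℝ)),
          r ∈ Set.range ((↑) : ℕ → ℝ) :=
        (eventually_principal.mpr (fun x h => h)).filter_mono inf_le_right
      filter_upwards [h1, h2] with r hr1 hr2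
      obtain ⟨n, rfl⟩ := hr2
      simp only [Nat.floor_natCast]
      have hn : m k₀ ≤ n := by exact_mod_cast hr1
      have e1 := hconst y ay k₀ hevy n hn
      have e2 := hconst z az k₀ hevz n hn
      have eZ : (G.dist (c n) y : ℤ) - (G.dist (c n) z : ℤ) = ay - az := by omega
      exact_mod_cast (congrArg (Int.cast : ℤ → ℝ) eZ).symm
    · -- limit along T'
      apply Tendsto.congr' _ tendsto_const_nhds
      have h1 : ∀ᶠ t in atTop ⊓ 𝓟 T', u k₀ ≤ t :=
        (eventually_ge_atTop _).filter_mono inf_le_left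
      have h2 : ∀ᶠ t in atTop ⊓ 𝓟 T', t ∈ T' :=
        (eventually_principal.mpr (fun x h => h)).filter_mono inf_le_right
      filter_upwards [h1, h2] with t hr1 hr2
      have e1 := hevy t hr2 hr1
      have e2 := hevz t hr2 hr1
      have eZ : (G.dist (γ' t) y : ℤ) - (G.dist (γ' t) z : ℤ) = ay - az := by omega
      exact_mod_cast (congrArg (Int.cast : ℤ → ℝ) eZ).symm
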